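/- Let U ⊆ ℂᵐ be open, H a complex Hilbert space, and h a smoothly varying metric on U × H admitting Chern connection D with curvature Θ. Fix ε > 0. Then iΘ ≤_G 0 (Griffiths seminegative) if and only if log(‖u‖²_h + ε) is plurisubharmonic for every holomorphic local section u of U × H and every ε > 0. -/

import Mathlib

/-- The (1,0)-part of the real Fréchet derivative of `u` at `t` in direction `z`:
`∂u(z) = ½(Du(z) − i·Du(i·z))`. -/
noncomputable def del {E F : Type*} [NormedAddCommGroup E] [NormedSpace ℂ E]
    [NormedAddCommGroup F] [NormedSpace ℂ F] (u : E → F) (t z : E) : F :=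
  (2⁻¹ : ℂ) • (fderiv ℝ u t z - Complex.I • fderiv ℝ u t (Complex.I • z))

/-- The (0,1)-part of the real Fréchet derivative of `u` at `t` in direction `z`:
`∂̄u(z) = ½(Du(z) + i·Du(i·z))`. -/
noncomputable def delbar {E F : Type*} [NormedAddCommGroup E] [NormedSpace ℂ E]
    [NormedAddCommGroup F] [NormedSpace ℂ F] (u : E → F) (t z : E) : F :=
  (2⁻¹ : ℂ) • (fderiv ℝ u t z + Complex.I • fderiv ℝ u t (Complex.I • z))
/-- The `(z, z̄')`-component of the Chern curvature `Θ = δ∂̄ + ∂̄δ` (as a `(1,1)`-form),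
i.e. `Θ_{z z̄'} u = δ_z(∂̄_{z'} u) − ∂̄_{z'}(δ_z u)`. -/
noncomputable def curvC {m : ℕ} {H : Type*} [NormedAddCommGroup H] [NormedSpace ℂ H]
    (δ : ((Fin m → ℂ) → H) → (Fin m → ℂ) → (Fin m → ℂ) → H)
    (u : (Fin m → ℂ) → H) (t z z' : Fin m → ℂ) : H :=
  δ (fun s => delbar u s z') t z - delbar (fun s => δ u s z) t z'
/-- Plurisubharmonicity (for the smooth functions occurring here): the complex Hessian is
positive semidefinite, componentwise `0 ≤ ∂_z ∂̄_z f` at every point of `U`, in every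
direction `z`. -/
noncomputable def PshOn {m : ℕ} (f : (Fin m → ℂ) → ℝ) (U : Set (Fin m → ℂ)) : Prop :=
  ∀ t ∈ U, ∀ z : Fin m → ℂ,
    0 ≤ (del (fun s => delbar (fun s' => (f s' : ℂ)) s z) t z).re


structure Setup (m : ℕ) (H : Type*) [NormedAddCommGroup H] [NormedSpace ℂ H] where
  U : Set (Fin m → ℂ)
  hU : IsOpen U
  h : (Fin m → ℂ) → H → H → ℂ
  hadd : ∀ t ∈ U, ∀ u v w' : H, h t (u + v) w' = h t u w' + h t v w'
  hsub : ∀ t ∈ U, ∀ u v w' : H, h t (u - v) w' = h t u w' - h t v w'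
  hsmul : ∀ t ∈ U, ∀ (c : ℂ) (u v : H), h t (c • u) v = c * h t u v
  hsymm : ∀ t ∈ U, ∀ u v : H, h t u v = starRingEnd ℂ (h t v u)
  hpos : ∀ t ∈ U, ∀ u : H, u ≠ 0 → 0 < (h t u u).re
  δ : ((Fin m → ℂ) → H) → (Fin m → ℂ) → (Fin m → ℂ) → H
  hδ : ∀ V : Set (Fin m → ℂ), IsOpen V → V ⊆ U →
    ∀ u v : (Fin m → ℂ) → H, ContDiffOn ℝ (⊤ : ℕ∞) u V → ContDiffOn ℝ (⊤ : ℕ∞) v V →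
    ∀ t ∈ V, ∀ z : Fin m → ℂ,
      del (fun s => h s (u s) (v s)) t z = h t (δ u t z) (v t) + h t (u t) (delbar v t z)
  hδsm : ∀ V : Set (Fin m → ℂ), IsOpen V → V ⊆ U →
    ∀ u : (Fin m → ℂ) → H, ContDiffOn ℝ (⊤ : ℕ∞) u V →
    ∀ z : Fin m → ℂ, ContDiffOn ℝ (⊤ : ℕ∞) (fun t => δ u t z) V
  hδloc : ∀ V : Set (Fin m → ℂ), IsOpen V → V ⊆ U →
    ∀ u v : (Fin m → ℂ) → H, (∀ s ∈ V, u s = v s) →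
    ∀ t ∈ V, ∀ z : Fin m → ℂ, δ u t z = δ v t z
  hδadd : ∀ V : Set (Fin m → ℂ), IsOpen V → V ⊆ U →
    ∀ u v : (Fin m → ℂ) → H, ContDiffOn ℝ (⊤ : ℕ∞) u V → ContDiffOn ℝ (⊤ : ℕ∞) v V →
    ∀ t ∈ V, ∀ z : Fin m → ℂ, δ (fun s => u s + v s) t z = δ u t z + δ v t z
  hδlin : ∀ (u : (Fin m → ℂ) → H), ∀ t ∈ U, IsLinearMap ℂ (fun z => δ u t z)
  hLeib : ∀ V : Set (Fin m → ℂ), IsOpen V → V ⊆ U →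
    ∀ (f : (Fin m → ℂ) → ℂ) (u : (Fin m → ℂ) → H),
    ContDiffOn ℝ (⊤ : ℕ∞) f V → ContDiffOn ℝ (⊤ : ℕ∞) u V →
    ∀ t ∈ V, ∀ z : Fin m → ℂ,
      δ (fun s => f s • u s) t z = del f t z • u t + f t • δ u t z

section A

variable {E F : Type*} [NormedAddCommGroup E] [NormedSpace ℂ E]
  [NormedAddCommGroup F] [NormedSpace ℂ F] {t z : E}

lemma del_add_delbar (u : E → F) (t z : E) : del u t z + delbar u t z = fderiv ℝ u t z := by
  unfold del delbar; module

lemma del_congr {f g : E → F} (hfg : f =ᶠ[nhds t] g) (z : E) : del f t z = del g t z := by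
  unfold del; rw [hfg.fderiv_eq]

lemma delbar_congr {f g : E → F} (hfg : f =ᶠ[nhds t] g) (z : E) :
    delbar f t z = delbar g t z := by
  unfold delbar; rw [hfg.fderiv_eq]

lemma del_const (c : F) : del (fun _ : E => c) t z = 0 := by
  unfold del; simp

lemma delbar_const (c : F) : delbar (fun _ : E => c) t z = 0 := by
  unfold delbar; simp

lemma del_add {u v : E → F} (hu : DifferentiableAt ℝ u t) (hv : DifferentiableAt ℝ v t) :
    del (fun s => u s + v s) t z = del u t z + del v t z := by
  unfold del; rw [fderiv_fun_add hu hv]; simp only [ContinuousLinearMap.add_apply]; module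

lemma delbar_add {u v : E → F} (hu : DifferentiableAt ℝ u t) (hv : DifferentiableAt ℝ v t) :
    delbar (fun s => u s + v s) t z = delbar u t z + delbar v t z := by
  unfold delbar; rw [fderiv_fun_add hu hv]; simp only [ContinuousLinearMap.add_apply]; module

lemma del_sub {u v : E → F} (hu : DifferentiableAt ℝ u t) (hv : DifferentiableAt ℝ v t) :
    del (fun s => u s - v s) t z = del u t z - del v t z := by
  unfold del; rw [fderiv_fun_sub hu hv]; simp only [ContinuousLinearMap.sub_apply]; module

lemma delbar_sub {u v : E → F} (hu : DifferentiableAt ℝ u t) (hv : DifferentiableAt ℝ v t) :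
    delbar (fun s => u s - v s) t z = delbar u t z - delbar v t z := by
  unfold delbar; rw [fderiv_fun_sub hu hv]; simp only [ContinuousLinearMap.sub_apply]; module

lemma del_const_smul {u : E → F} (hu : DifferentiableAt ℝ u t) (c : ℂ) :
    del (fun s => c • u s) t z = c • del u t z := by
  unfold del
  rw [fderiv_fun_const_smul hu c]
  simp only [ContinuousLinearMap.smul_apply]
  module

lemma delbar_const_smul {u : E → F} (hu : DifferentiableAt ℝ u t) (c : ℂ) :
    delbar (fun s => c • u s) t z = c • delbar u t z := by
  unfold delbar
  rw [fderiv_fun_const_smul hu c]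
  simp only [ContinuousLinearMap.smul_apply]
  module

lemma del_smul {f : E → ℂ} {u : E → F} (hf : DifferentiableAt ℝ f t)
    (hu : DifferentiableAt ℝ u t) :
    del (fun s => f s • u s) t z = del f t z • u t + f t • del u t z := by
  unfold del
  rw [fderiv_fun_smul hf hu]
  simp only [ContinuousLinearMap.add_apply, ContinuousLinearMap.smul_apply,
    ContinuousLinearMap.smulRight_apply, smul_eq_mul]
  module

lemma delbar_smul {f : E → ℂ} {u : E → F} (hf : DifferentiableAt ℝ f t)
    (hu : DifferentiableAt ℝ u t) :
    delbar (fun s => f s • u s) t z = delbar f t z • u t + f t • delbar u t z := by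
  unfold delbar
  rw [fderiv_fun_smul hf hu]
  simp only [ContinuousLinearMap.add_apply, ContinuousLinearMap.smul_apply,
    ContinuousLinearMap.smulRight_apply, smul_eq_mul]
  module

lemma del_conj (g : E → ℂ) (t z : E) :
    del (fun s => (starRingEnd ℂ) (g s)) t z = (starRingEnd ℂ) (delbar g t z) := by
  have hc : fderiv ℝ (fun s => (starRingEnd ℂ) (g s)) t
      = ((Complex.conjCLE : ℂ ≃L[ℝ] ℂ) : ℂ →L[ℝ] ℂ).comp (fderiv ℝ g t) := by
    have := (Complex.conjCLE : ℂ ≃L[ℝ] ℂ).comp_fderiv (f := g) (x := t)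
    exact this
  unfold del delbar
  rw [hc]
  simp only [ContinuousLinearMap.comp_apply, ContinuousLinearEquiv.coe_coe,
    Complex.conjCLE_apply, smul_eq_mul, map_mul, map_add, Complex.conj_I]
  rw [show ((starRingEnd ℂ) 2⁻¹ : ℂ) = 2⁻¹ by simp [Complex.ext_iff]]
  ring

lemma delbar_conj (g : E → ℂ) (t z : E) :
    delbar (fun s => (starRingEnd ℂ) (g s)) t z = (starRingEnd ℂ) (del g t z) := by
  have hc : fderiv ℝ (fun s => (starRingEnd ℂ) (g s)) t
      = ((Complex.conjCLE : ℂ ≃L[ℝ] ℂ) : ℂ →L[ℝ] ℂ).comp (fderiv ℝ g t) := by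
    have := (Complex.conjCLE : ℂ ≃L[ℝ] ℂ).comp_fderiv (f := g) (x := t)
    exact this
  unfold del delbar
  rw [hc]
  simp only [ContinuousLinearMap.comp_apply, ContinuousLinearEquiv.coe_coe,
    Complex.conjCLE_apply, smul_eq_mul, map_mul, map_sub, Complex.conj_I]
  rw [show ((starRingEnd ℂ) 2⁻¹ : ℂ) = 2⁻¹ by simp [Complex.ext_iff]]
  ring

end A

section B

variable {E F : Type*} [NormedAddCommGroup E] [NormedSpace ℂ E]
  [NormedAddCommGroup F] [NormedSpace ℂ F] {t z : E}

lemma del_of_hasFDerivAt {u : E → F} {D : E →L[ℝ] F} (hD : HasFDerivAt u D t) :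
    del u t z = (2⁻¹ : ℂ) • (D z - Complex.I • D (Complex.I • z)) := by
  unfold del; rw [hD.fderiv]

lemma delbar_of_hasFDerivAt {u : E → F} {D : E →L[ℝ] F} (hD : HasFDerivAt u D t) :
    delbar u t z = (2⁻¹ : ℂ) • (D z + Complex.I • D (Complex.I • z)) := by
  unfold delbar; rw [hD.fderiv]

lemma del_add_const {u : E → F} (c : F) :
    del (fun s => u s + c) t z = del u t z := by
  unfold del; rw [fderiv_add_const]

lemma delbar_add_const {u : E → F} (c : F) :
    delbar (fun s => u s + c) t z = delbar u t z := by
  unfold delbar; rw [fderiv_add_const]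

lemma delbar_log {fR : E → ℝ} (hf : DifferentiableAt ℝ fR t) (hp : 0 < fR t) :
    delbar (fun s => ((Real.log (fR s) : ℝ) : ℂ)) t z
      = ((fR t)⁻¹ : ℝ) • delbar (fun s => ((fR s : ℝ) : ℂ)) t z := by
  have h1 : HasFDerivAt (fun s => Real.log (fR s)) ((fR t)⁻¹ • fderiv ℝ fR t) t :=
    (Real.hasDerivAt_log hp.ne').comp_hasFDerivAt t hf.hasFDerivAt
  have h2 := Complex.ofRealCLM.hasFDerivAt.comp t h1
  have h3 := Complex.ofRealCLM.hasFDerivAt.comp t hf.hasFDerivAt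
  simp only [Function.comp_def, Complex.ofRealCLM_apply] at h2 h3
  rw [delbar_of_hasFDerivAt h2, delbar_of_hasFDerivAt h3]
  simp only [ContinuousLinearMap.comp_apply, ContinuousLinearMap.smul_apply,
    Complex.ofRealCLM_apply, Complex.ofReal_mul, smul_eq_mul, Complex.real_smul]
  push_cast
  ring

lemma del_inv {fR : E → ℝ} (hf : DifferentiableAt ℝ fR t) (hne : fR t ≠ 0) :
    del (fun s => (((fR s)⁻¹ : ℝ) : ℂ)) t z
      = (-((fR t) ^ 2)⁻¹ : ℝ) • del (fun s => ((fR s : ℝ) : ℂ)) t z := by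
  have h1 : HasFDerivAt (fun s => (fR s)⁻¹) ((-((fR t) ^ 2)⁻¹) • fderiv ℝ fR t) t :=
    (hasDerivAt_inv hne).comp_hasFDerivAt t hf.hasFDerivAt
  have h2 := Complex.ofRealCLM.hasFDerivAt.comp t h1
  have h3 := Complex.ofRealCLM.hasFDerivAt.comp t hf.hasFDerivAt
  simp only [Function.comp_def, Complex.ofRealCLM_apply] at h2 h3
  rw [del_of_hasFDerivAt h2, del_of_hasFDerivAt h3]
  simp only [ContinuousLinearMap.comp_apply, ContinuousLinearMap.smul_apply,
    Complex.ofRealCLM_apply, Complex.ofReal_mul, smul_eq_mul, Complex.real_smul]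
  push_cast
  ring

lemma contDiffOn_csmul {V : Set E} {f : E → ℂ} {u : E → F}
    (hf : ContDiffOn ℝ (⊤ : ℕ∞) f V) (hu : ContDiffOn ℝ (⊤ : ℕ∞) u V) :
    ContDiffOn ℝ (⊤ : ℕ∞) (fun s => f s • u s) V :=
  (((ContinuousLinearMap.lsmul ℝ ℂ : ℂ →L[ℝ] F →L[ℝ] F).contDiff.comp_contDiffOn
    hf).clm_apply hu :)

lemma contDiffOn_differentiableAt {V : Set E} (hV : IsOpen V) {u : E → F}
    (hu : ContDiffOn ℝ (⊤ : ℕ∞) u V) {s : E} (hs : s ∈ V) : DifferentiableAt ℝ u s :=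
  ((hu.differentiableOn (by simp)) s hs).differentiableAt (hV.mem_nhds hs)

lemma contDiffOn_delbar {V : Set E} (hV : IsOpen V) {u : E → F}
    (hu : ContDiffOn ℝ (⊤ : ℕ∞) u V) (z : E) :
    ContDiffOn ℝ (⊤ : ℕ∞) (fun s => delbar u s z) V := by
  have hD : ContDiffOn ℝ (⊤ : ℕ∞) (fun s => fderiv ℝ u s) V :=
    hu.fderiv_of_isOpen hV (by exact_mod_cast le_top)
  unfold delbar
  exact (((hD.clm_apply contDiffOn_const).add
    ((hD.clm_apply contDiffOn_const).const_smul Complex.I)).const_smul ((2:ℂ)⁻¹))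

lemma contDiffOn_del {V : Set E} (hV : IsOpen V) {u : E → F}
    (hu : ContDiffOn ℝ (⊤ : ℕ∞) u V) (z : E) :
    ContDiffOn ℝ (⊤ : ℕ∞) (fun s => del u s z) V := by
  have hD : ContDiffOn ℝ (⊤ : ℕ∞) (fun s => fderiv ℝ u s) V :=
    hu.fderiv_of_isOpen hV (by exact_mod_cast le_top)
  unfold del
  exact (((hD.clm_apply contDiffOn_const).sub
    ((hD.clm_apply contDiffOn_const).const_smul Complex.I)).const_smul ((2:ℂ)⁻¹))

lemma clairaut {V : Set E} (hV : IsOpen V) {g : E → F} {t : E} (ht : t ∈ V)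
    (hd : ∀ s ∈ V, DifferentiableAt ℝ g s)
    (hd2 : DifferentiableAt ℝ (fun s => fderiv ℝ g s) t) (z z' : E) :
    del (fun s => delbar g s z') t z = delbar (fun s => del g s z) t z' := by
  set Φ : E → (E →L[ℝ] F) := fun s => fderiv ℝ g s with hΦdef
  have hΦ : HasFDerivAt Φ (fderiv ℝ Φ t) t := hd2.hasFDerivAt
  set Q : E →L[ℝ] E →L[ℝ] F := fderiv ℝ Φ t with hQdef
  have hsym : ∀ a b : E, Q a b = Q b a := by
    intro a b
    exact second_derivative_symmetric_of_eventually
      (by filter_upwards [hV.mem_nhds ht] with s hs; exact (hd s hs).hasFDerivAt) hΦ a b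
  have happ : ∀ w : E, HasFDerivAt (fun s => Φ s w)
      ((ContinuousLinearMap.apply ℝ F w).comp Q) t := by
    intro w
    exact (ContinuousLinearMap.apply ℝ F w).hasFDerivAt.comp t hΦ
  have hB : ∀ w : E, HasFDerivAt (fun s => delbar g s w)
      ((2⁻¹ : ℂ) • ((ContinuousLinearMap.apply ℝ F w).comp Q
        + Complex.I • (ContinuousLinearMap.apply ℝ F (Complex.I • w)).comp Q)) t := by
    intro w
    have := ((happ w).add ((happ (Complex.I • w)).const_smul Complex.I)).const_smul
      ((2:ℂ)⁻¹)
    exact this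
  have hC : ∀ w : E, HasFDerivAt (fun s => del g s w)
      ((2⁻¹ : ℂ) • ((ContinuousLinearMap.apply ℝ F w).comp Q
        - Complex.I • (ContinuousLinearMap.apply ℝ F (Complex.I • w)).comp Q)) t := by
    intro w
    have := ((happ w).sub ((happ (Complex.I • w)).const_smul Complex.I)).const_smul
      ((2:ℂ)⁻¹)
    exact this
  rw [del_of_hasFDerivAt (hB z'), delbar_of_hasFDerivAt (hC z)]
  simp only [ContinuousLinearMap.smul_apply, ContinuousLinearMap.add_apply,
    ContinuousLinearMap.sub_apply, ContinuousLinearMap.comp_apply,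
    ContinuousLinearMap.apply_apply]
  rw [hsym z' z, hsym z' (Complex.I • z), hsym (Complex.I • z') z,
    hsym (Complex.I • z') (Complex.I • z)]
  module

end B

section C
variable {m : ℕ} {t z : Fin m → ℂ}

lemma coord_hasFDerivAt (j : Fin m) (c : ℂ) (t : Fin m → ℂ) :
    HasFDerivAt (fun s : Fin m → ℂ => s j - c)
      ((ContinuousLinearMap.proj j : (Fin m → ℂ) →L[ℝ] ℂ)) t := by
  simpa using ((ContinuousLinearMap.proj (R := ℝ) (φ := fun _ : Fin m => ℂ) j).hasFDerivAt
    (x := t)).sub_const c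

lemma del_coord (j : Fin m) (c : ℂ) : del (fun s : Fin m → ℂ => s j - c) t z = z j := by
  rw [del_of_hasFDerivAt (coord_hasFDerivAt j c t)]
  simp only [ContinuousLinearMap.proj_apply, Pi.smul_apply, smul_eq_mul]
  rw [← mul_assoc, Complex.I_mul_I]; ring

lemma delbar_coord (j : Fin m) (c : ℂ) : delbar (fun s : Fin m → ℂ => s j - c) t z = 0 := by
  rw [delbar_of_hasFDerivAt (coord_hasFDerivAt j c t)]
  simp only [ContinuousLinearMap.proj_apply, Pi.smul_apply, smul_eq_mul]
  rw [← mul_assoc, Complex.I_mul_I]; ring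

end C

/-- Smoothness of coordinate-affine scalar functions. -/
lemma lam_smooth {m : ℕ} (j : Fin m) (c e : ℂ) :
    ContDiff ℝ (⊤ : ℕ∞) (fun s : Fin m → ℂ => (s j - c) + e) := by
  exact (((ContinuousLinearMap.proj (R := ℝ) (φ := fun _ : Fin m => ℂ) j).contDiff).sub
    contDiff_const).add contDiff_const


lemma clm_decomp {m : ℕ} (L : (Fin m → ℂ) →L[ℝ] ℂ) :
    L = ∑ j : Fin m,
      ((Complex.reCLM.comp (ContinuousLinearMap.proj (R := ℝ) (φ := fun _ : Fin m => ℂ) j)).smulRight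
        (L ((Pi.single j 1 : Fin m → ℂ)))
      + (Complex.imCLM.comp (ContinuousLinearMap.proj (R := ℝ) (φ := fun _ : Fin m => ℂ) j)).smulRight
        (L (Complex.I • (Pi.single j 1 : Fin m → ℂ)))) := by
  ext z
  simp only [ContinuousLinearMap.sum_apply, ContinuousLinearMap.add_apply,
    ContinuousLinearMap.smulRight_apply, ContinuousLinearMap.comp_apply,
    ContinuousLinearMap.proj_apply, Complex.reCLM_apply, Complex.imCLM_apply]
  have hz : z = ∑ j : Fin m, Pi.single j (z j) := (Finset.univ_sum_single z).symm
  conv_lhs => rw [hz]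
  rw [map_sum]
  refine Finset.sum_congr rfl fun j _ => ?_
  have hsplit : (Pi.single j (z j) : Fin m → ℂ) = ((z j).re : ℝ) • (Pi.single j 1 : Fin m → ℂ)
      + ((z j).im : ℝ) • (Complex.I • (Pi.single j 1 : Fin m → ℂ)) := by
    funext k
    by_cases hk : k = j
    · subst hk
      simp only [Pi.single_eq_same, Pi.add_apply, Pi.smul_apply, smul_eq_mul]
      rw [Complex.real_smul, Complex.real_smul]
      push_cast
      rw [mul_one]
      rw [show ((z k).im : ℂ) * (Complex.I * 1) = (z k).im * Complex.I by ring]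
      exact (Complex.re_add_im (z k)).symm
    · simp [Pi.single_eq_of_ne hk]
  rw [hsplit, map_add, map_smul, map_smul]

namespace Setup
variable {m : ℕ} {H : Type*} [NormedAddCommGroup H] [NormedSpace ℂ H]
variable (S : Setup m H)

lemma h_zero_left {t : Fin m → ℂ} (ht : t ∈ S.U) (v : H) : S.h t 0 v = 0 := by
  have := S.hadd t ht 0 0 v
  simpa using this.symm

lemma h_zero_right {t : Fin m → ℂ} (ht : t ∈ S.U) (v : H) : S.h t v 0 = 0 := by
  rw [S.hsymm t ht, S.h_zero_left ht, map_zero]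

lemma h_add_right {t : Fin m → ℂ} (ht : t ∈ S.U) (u v w : H) :
    S.h t u (v + w) = S.h t u v + S.h t u w := by
  rw [S.hsymm t ht, S.hadd t ht, map_add, ← S.hsymm t ht, ← S.hsymm t ht]

lemma h_sub_right {t : Fin m → ℂ} (ht : t ∈ S.U) (u v w : H) :
    S.h t u (v - w) = S.h t u v - S.h t u w := by
  rw [S.hsymm t ht, S.hsub t ht, map_sub, ← S.hsymm t ht, ← S.hsymm t ht]

lemma h_smul_right {t : Fin m → ℂ} (ht : t ∈ S.U) (c : ℂ) (u v : H) :
    S.h t u (c • v) = starRingEnd ℂ c * S.h t u v := by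
  rw [S.hsymm t ht, S.hsmul t ht, map_mul, ← S.hsymm t ht]

lemma h_neg_right {t : Fin m → ℂ} (ht : t ∈ S.U) (u v : H) :
    S.h t u (-v) = -S.h t u v := by
  have := S.h_sub_right ht u 0 v
  simpa [S.h_zero_right ht] using this

lemma h_real {t : Fin m → ℂ} (ht : t ∈ S.U) (u : H) :
    ((S.h t u u).re : ℂ) = S.h t u u := by
  have hc := S.hsymm t ht u u
  have him : (S.h t u u).im = 0 := by
    have := congrArg Complex.im hc
    simp only [Complex.conj_im] at this
    linarith
  rw [Complex.ext_iff]
  simp [him]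

lemma h_re_nonneg {t : Fin m → ℂ} (ht : t ∈ S.U) (u : H) : 0 ≤ (S.h t u u).re := by
  by_cases hu : u = 0
  · simp [hu, S.h_zero_left ht]
  · exact (S.hpos t ht u hu).le

lemma h_self_eq_zero {t : Fin m → ℂ} (ht : t ∈ S.U) {u : H}
    (h0 : S.h t u u = 0) : u = 0 := by
  by_contra hu
  have := S.hpos t ht u hu
  rw [h0] at this
  simp at this

lemma cauchySchwarz {t : Fin m → ℂ} (ht : t ∈ S.U) (x y : H) :
    Complex.normSq (S.h t x y) ≤ (S.h t x x).re * (S.h t y y).re := by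
  by_cases hy : y = 0
  · simp [hy, S.h_zero_right ht]
  · have hb : 0 < (S.h t y y).re := S.hpos t ht y hy
    set b : ℝ := (S.h t y y).re with hbdef
    set β : ℂ := S.h t x y with hβdef
    have hyy : S.h t y y = (b : ℂ) := (S.h_real ht y).symm
    have hyx : S.h t y x = starRingEnd ℂ β := by rw [hβdef, ← S.hsymm t ht]
    have expand : S.h t ((b:ℂ) • x - β • y) ((b:ℂ) • x - β • y)
        = ((b:ℂ))^2 * S.h t x x - (b:ℂ) * (Complex.normSq β : ℂ) := by
      rw [S.hsub t ht]
      simp only [S.hsmul t ht, S.h_sub_right ht, S.h_smul_right ht]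
      rw [hyy, hyx, Complex.conj_ofReal, ← hβdef]
      rw [show (Complex.normSq β : ℂ) = β * starRingEnd ℂ β from (Complex.mul_conj β).symm]
      ring
    have key : 0 ≤ (S.h t ((b:ℂ) • x - β • y) ((b:ℂ) • x - β • y)).re :=
      S.h_re_nonneg ht _
    rw [expand] at key
    have : (((b:ℂ))^2 * S.h t x x - (b:ℂ) * (Complex.normSq β : ℂ)).re
        = b^2 * (S.h t x x).re - b * Complex.normSq β := by
      simp only [Complex.sub_re, Complex.mul_re, Complex.ofReal_re, Complex.ofReal_im,
        pow_two, Complex.mul_im, zero_mul, mul_zero, sub_zero, zero_sub]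
      ring
    rw [this] at key
    nlinarith [Complex.normSq_nonneg β]

lemma qdiff_ne {V : Set (Fin m → ℂ)} (hV : IsOpen V) (hVU : V ⊆ S.U)
    {w : (Fin m → ℂ) → H} (hw : ContDiffOn ℝ (⊤ : ℕ∞) w V) {t : Fin m → ℂ} (ht : t ∈ V)
    (hwt : w t ≠ 0) : DifferentiableAt ℝ (fun s => S.h s (w s) (w s)) t := by
  by_cases hm : m = 0
  · subst hm
    have hst : ∀ s : Fin 0 → ℂ, s = t := fun s => funext fun j => j.elim0
    have : (fun s : Fin 0 → ℂ => S.h s (w s) (w s)) = fun _ => S.h t (w t) (w t) := by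
      funext s; rw [hst s]
    rw [this]; exact differentiableAt_const _
  by_contra hnd
  have htU : t ∈ S.U := hVU ht
  obtain ⟨j0⟩ : Nonempty (Fin m) := ⟨⟨0, Nat.pos_of_ne_zero hm⟩⟩
  set z0 : Fin m → ℂ := Pi.single j0 1 with hz0
  set lam : (Fin m → ℂ) → ℂ := fun s => (s j0 - t j0) + 1 with hlam
  have hlamsm : ContDiff ℝ (⊤ : ℕ∞) lam := lam_smooth j0 (t j0) 1
  have hlamt : lam t = 1 := by simp [hlam]
  have hlamd : ∀ s, DifferentiableAt ℝ lam s := fun s =>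
    (hlamsm.differentiable (by simp)).differentiableAt
  have hconjd : ∀ s, DifferentiableAt ℝ (fun s' => starRingEnd ℂ (lam s')) s := fun s =>
    (Complex.conjCLE : ℂ ≃L[ℝ] ℂ).differentiableAt.comp s (hlamd s)
  set w' : (Fin m → ℂ) → H := fun s => lam s • w s with hw'
  have hw'sm : ContDiffOn ℝ (⊤ : ℕ∞) w' V := by
    rw [hw']; exact contDiffOn_csmul (hlamsm.contDiffOn) hw
  set q : (Fin m → ℂ) → ℂ := fun s => S.h s (w s) (w s) with hq
  set q' : (Fin m → ℂ) → ℂ := fun s => S.h s (w' s) (w' s) with hq'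
  have hfactor : ∀ s ∈ V, q' s = (lam s * starRingEnd ℂ (lam s)) * q s := by
    intro s hs
    have hsU := hVU hs
    show S.h s (lam s • w s) (lam s • w s) = _
    rw [S.hsmul s hsU, S.h_smul_right hsU]
    show lam s * (starRingEnd ℂ (lam s) * S.h s (w s) (w s)) = _
    ring
  have hq'nd : ¬ DifferentiableAt ℝ q' t := by
    intro hd
    apply hnd
    have hWopen : IsOpen (V ∩ {s | lam s ≠ 0}) :=
      hV.inter (isOpen_ne_fun hlamsm.continuous continuous_const)
    have hWt : t ∈ V ∩ {s | lam s ≠ 0} := ⟨ht, by simp [hlamt]⟩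
    have hEq : (fun s => (lam s * starRingEnd ℂ (lam s))⁻¹ * q' s) =ᶠ[nhds t] q := by
      filter_upwards [hWopen.mem_nhds hWt] with s hs
      rw [hfactor s hs.1]
      have hne : lam s * starRingEnd ℂ (lam s) ≠ 0 :=
        mul_ne_zero hs.2 (by simpa using hs.2)
      field_simp
      exact mul_div_cancel_left₀ _ hne
    have hdinv : DifferentiableAt ℝ (fun s => (lam s * starRingEnd ℂ (lam s))⁻¹) t := by
      apply DifferentiableAt.inv ((hlamd t).mul (hconjd t))
      simp [hlamt]
    exact (hdinv.mul hd).congr_of_eventuallyEq hEq.symm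
  have hdq : del q t z0 = 0 := by
    unfold del; rw [fderiv_zero_of_not_differentiableAt hnd]; simp
  have hdq' : del q' t z0 = 0 := by
    unfold del; rw [fderiv_zero_of_not_differentiableAt hq'nd]; simp
  have e1 := S.hδ V hV hVU w w hw hw t ht z0
  have e2 := S.hδ V hV hVU w' w' hw'sm hw'sm t ht z0
  rw [show (fun s => S.h s (w s) (w s)) = q from rfl] at e1
  rw [show (fun s => S.h s (w' s) (w' s)) = q' from rfl] at e2
  rw [hdq] at e1
  rw [hdq'] at e2
  have hdellam : del lam t z0 = z0 j0 := by
    rw [hlam]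
    rw [show (fun s : Fin m → ℂ => (s j0 - t j0) + 1) = (fun s : Fin m → ℂ => (s j0 - t j0) + 1)
      from rfl]
    rw [del_add_const, del_coord]
  have hdblam : delbar lam t z0 = 0 := by
    rw [hlam, delbar_add_const, delbar_coord]
  have hδw' : S.δ w' t z0 = (z0 j0) • w t + S.δ w t z0 := by
    have := S.hLeib V hV hVU lam w hlamsm.contDiffOn hw t ht z0
    rw [show S.δ w' t z0 = S.δ (fun s => lam s • w s) t z0 from rfl, this, hdellam, hlamt,
      one_smul]
  have hdbw' : delbar w' t z0 = delbar w t z0 := by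
    rw [show delbar w' t z0 = delbar (fun s => lam s • w s) t z0 from rfl,
      delbar_smul (hlamd t) (contDiffOn_differentiableAt hV hw ht), hdblam, hlamt, one_smul,
      zero_smul, zero_add]
  have hw't : w' t = w t := by rw [hw']; simp [hlamt]
  rw [hδw', hdbw', hw't, S.hadd t htU, S.hsmul t htU] at e2
  rw [add_assoc, ← e1, add_zero] at e2
  have hz0j : z0 j0 = 1 := by simp [hz0]
  rw [hz0j] at e2
  simp only [one_mul] at e2
  exact hwt (S.h_self_eq_zero htU e2.symm)

lemma qdiff {V : Set (Fin m → ℂ)} (hV : IsOpen V) (hVU : V ⊆ S.U)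
    {w : (Fin m → ℂ) → H} (hw : ContDiffOn ℝ (⊤ : ℕ∞) w V) {t : Fin m → ℂ} (ht : t ∈ V) :
    DifferentiableAt ℝ (fun s => S.h s (w s) (w s)) t := by
  by_cases hwt : w t = 0
  swap
  · exact S.qdiff_ne hV hVU hw ht hwt
  by_cases hH : ∀ x : H, x = 0
  · have hEq : (fun _ => (0 : ℂ)) =ᶠ[nhds t] (fun s => S.h s (w s) (w s)) := by
      filter_upwards [hV.mem_nhds ht] with s hs
      rw [hH (w s)]
      exact (S.h_zero_left (hVU hs) 0).symm
    exact (differentiableAt_const 0).congr_of_eventuallyEq hEq.symm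
  · push_neg at hH
    obtain ⟨x, hx0⟩ := hH
    have hw1 : ContDiffOn ℝ (⊤ : ℕ∞) (fun s => w s + x) V := hw.add contDiffOn_const
    have hw2 : ContDiffOn ℝ (⊤ : ℕ∞) (fun s => w s + (2:ℂ) • x) V := hw.add contDiffOn_const
    have d1 : DifferentiableAt ℝ (fun s => S.h s (w s + x) (w s + x)) t :=
      S.qdiff_ne hV hVU hw1 ht (by rw [hwt, zero_add]; exact hx0)
    have d2 : DifferentiableAt ℝ (fun s => S.h s (w s + (2:ℂ) • x) (w s + (2:ℂ) • x)) t :=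
      S.qdiff_ne hV hVU hw2 ht
        (by rw [hwt, zero_add]; exact smul_ne_zero (by norm_num) hx0)
    have d0 : DifferentiableAt ℝ (fun s => S.h s x x) t :=
      S.qdiff_ne hV hVU contDiffOn_const ht hx0
    have hEq : (fun s => 2 * S.h s (w s + x) (w s + x)
        - S.h s (w s + (2:ℂ) • x) (w s + (2:ℂ) • x) + 2 * S.h s x x)
        =ᶠ[nhds t] (fun s => S.h s (w s) (w s)) := by
      filter_upwards [hV.mem_nhds ht] with s hs
      have hsU := hVU hs
      simp only [S.hadd s hsU, S.h_add_right hsU, S.hsmul s hsU, S.h_smul_right hsU]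
      rw [show (starRingEnd ℂ) (2:ℂ) = 2 by simp [Complex.ext_iff]]
      ring
    exact (((d1.const_mul 2).sub d2).add (d0.const_mul 2)).congr_of_eventuallyEq hEq.symm

lemma polarization {t : Fin m → ℂ} (ht : t ∈ S.U) (x y : H) :
    S.h t x y = 4⁻¹ * (S.h t (x + y) (x + y) + Complex.I * S.h t (x + Complex.I • y) (x + Complex.I • y)
      - S.h t (x - y) (x - y) - Complex.I * S.h t (x - Complex.I • y) (x - Complex.I • y)) := by
  simp only [S.hadd t ht, S.hsub t ht, S.h_add_right ht, S.h_sub_right ht, S.hsmul t ht,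
    S.h_smul_right ht, Complex.conj_I]
  have hI := Complex.I_mul_I
  ring_nf
  rw [Complex.I_sq]
  ring

lemma pairdiff {V : Set (Fin m → ℂ)} (hV : IsOpen V) (hVU : V ⊆ S.U)
    {u v : (Fin m → ℂ) → H} (hu : ContDiffOn ℝ (⊤ : ℕ∞) u V)
    (hv : ContDiffOn ℝ (⊤ : ℕ∞) v V) {t : Fin m → ℂ} (ht : t ∈ V) :
    DifferentiableAt ℝ (fun s => S.h s (u s) (v s)) t := by
  have d0 : DifferentiableAt ℝ (fun s => S.h s (u s + v s) (u s + v s)) t :=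
    S.qdiff hV hVU (hu.add hv) ht
  have d1 : DifferentiableAt ℝ
      (fun s => S.h s (u s + Complex.I • v s) (u s + Complex.I • v s)) t :=
    S.qdiff hV hVU (hu.add (contDiffOn_csmul contDiffOn_const hv)) ht
  have d2 : DifferentiableAt ℝ (fun s => S.h s (u s - v s) (u s - v s)) t :=
    S.qdiff hV hVU (hu.sub hv) ht
  have d3 : DifferentiableAt ℝ
      (fun s => S.h s (u s - Complex.I • v s) (u s - Complex.I • v s)) t :=
    S.qdiff hV hVU (hu.sub (contDiffOn_csmul contDiffOn_const hv)) ht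
  have hEq : (fun s => 4⁻¹ * (S.h s (u s + v s) (u s + v s)
      + Complex.I * S.h s (u s + Complex.I • v s) (u s + Complex.I • v s)
      - S.h s (u s - v s) (u s - v s)
      - Complex.I * S.h s (u s - Complex.I • v s) (u s - Complex.I • v s)))
      =ᶠ[nhds t] (fun s => S.h s (u s) (v s)) := by
    filter_upwards [hV.mem_nhds ht] with s hs
    exact (S.polarization (hVU hs) (u s) (v s)).symm
  exact ((((d0.add (d1.const_mul Complex.I)).sub d2).sub
    (d3.const_mul Complex.I)).const_mul 4⁻¹).congr_of_eventuallyEq hEq.symm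

lemma delbar_pair {V : Set (Fin m → ℂ)} (hV : IsOpen V) (hVU : V ⊆ S.U)
    {u v : (Fin m → ℂ) → H} (hu : ContDiffOn ℝ (⊤ : ℕ∞) u V)
    (hv : ContDiffOn ℝ (⊤ : ℕ∞) v V) {t : Fin m → ℂ} (ht : t ∈ V) (z : Fin m → ℂ) :
    delbar (fun s => S.h s (u s) (v s)) t z
      = S.h t (u t) (S.δ v t z) + S.h t (delbar u t z) (v t) := by
  have hconj : (fun s => S.h s (u s) (v s))
      =ᶠ[nhds t] (fun s => starRingEnd ℂ (S.h s (v s) (u s))) := by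
    filter_upwards [hV.mem_nhds ht] with s hs
    exact S.hsymm s (hVU hs) (u s) (v s)
  rw [delbar_congr hconj, delbar_conj, S.hδ V hV hVU v u hv hu t ht z, map_add]
  rw [← S.hsymm t (hVU ht), ← S.hsymm t (hVU ht)]

lemma fderiv_pair {V : Set (Fin m → ℂ)} (hV : IsOpen V) (hVU : V ⊆ S.U)
    {u v : (Fin m → ℂ) → H} (hu : ContDiffOn ℝ (⊤ : ℕ∞) u V)
    (hv : ContDiffOn ℝ (⊤ : ℕ∞) v V) {t : Fin m → ℂ} (ht : t ∈ V) (z : Fin m → ℂ) :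
    fderiv ℝ (fun s => S.h s (u s) (v s)) t z
      = S.h t (S.δ u t z) (v t) + S.h t (u t) (delbar v t z)
      + (S.h t (u t) (S.δ v t z) + S.h t (delbar u t z) (v t)) := by
  rw [← del_add_delbar, S.hδ V hV hVU u v hu hv t ht z, S.delbar_pair hV hVU hu hv ht z]

lemma pair_fderiv_diff {V : Set (Fin m → ℂ)} (hV : IsOpen V) (hVU : V ⊆ S.U)
    {u v : (Fin m → ℂ) → H} (hu : ContDiffOn ℝ (⊤ : ℕ∞) u V)
    (hv : ContDiffOn ℝ (⊤ : ℕ∞) v V) {t : Fin m → ℂ} (ht : t ∈ V) :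
    DifferentiableAt ℝ (fun s => fderiv ℝ (fun s' => S.h s' (u s') (v s')) s) t := by
  have hA : ∀ w : Fin m → ℂ,
      DifferentiableAt ℝ (fun s => fderiv ℝ (fun s' => S.h s' (u s') (v s')) s w) t := by
    intro w
    have d1 := S.pairdiff hV hVU (S.hδsm V hV hVU u hu w) hv ht
    have d2 := S.pairdiff hV hVU hu (contDiffOn_delbar hV hv w) ht
    have d3 := S.pairdiff hV hVU hu (S.hδsm V hV hVU v hv w) ht
    have d4 := S.pairdiff hV hVU (contDiffOn_delbar hV hu w) hv ht
    have hEq : (fun s => S.h s (S.δ u s w) (v s) + S.h s (u s) (delbar v s w)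
        + (S.h s (u s) (S.δ v s w) + S.h s (delbar u s w) (v s)))
        =ᶠ[nhds t] (fun s => fderiv ℝ (fun s' => S.h s' (u s') (v s')) s w) := by
      filter_upwards [hV.mem_nhds ht] with s hs
      exact (S.fderiv_pair hV hVU hu hv hs w).symm
    exact (((d1.add d2).add (d3.add d4))).congr_of_eventuallyEq hEq.symm
  rw [show (fun s => fderiv ℝ (fun s' => S.h s' (u s') (v s')) s)
      = fun s => ∑ j : Fin m,
        ((Complex.reCLM.comp (ContinuousLinearMap.proj (R := ℝ) (φ := fun _ : Fin m => ℂ) j)).smulRight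
          (fderiv ℝ (fun s' => S.h s' (u s') (v s')) s ((Pi.single j 1 : Fin m → ℂ)))
        + (Complex.imCLM.comp (ContinuousLinearMap.proj (R := ℝ) (φ := fun _ : Fin m => ℂ) j)).smulRight
          (fderiv ℝ (fun s' => S.h s' (u s') (v s')) s (Complex.I • (Pi.single j 1 : Fin m → ℂ))))
    from funext fun s => clm_decomp _]
  apply DifferentiableAt.fun_sum
  intro j _
  apply DifferentiableAt.add
  · exact (ContinuousLinearMap.smulRightL ℝ (Fin m → ℂ) ℂ
      (Complex.reCLM.comp (ContinuousLinearMap.proj j))).differentiableAt.comp t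
      (hA ((Pi.single j 1 : Fin m → ℂ)))
  · exact (ContinuousLinearMap.smulRightL ℝ (Fin m → ℂ) ℂ
      (Complex.imCLM.comp (ContinuousLinearMap.proj j))).differentiableAt.comp t
      (hA (Complex.I • (Pi.single j 1 : Fin m → ℂ)))

lemma pair_clairaut {V : Set (Fin m → ℂ)} (hV : IsOpen V) (hVU : V ⊆ S.U)
    {u v : (Fin m → ℂ) → H} (hu : ContDiffOn ℝ (⊤ : ℕ∞) u V)
    (hv : ContDiffOn ℝ (⊤ : ℕ∞) v V) {t : Fin m → ℂ} (ht : t ∈ V) (z z' : Fin m → ℂ) :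
    del (fun s => delbar (fun s' => S.h s' (u s') (v s')) s z') t z
      = delbar (fun s => del (fun s' => S.h s' (u s') (v s')) s z) t z' :=
  clairaut hV ht (fun s hs => S.pairdiff hV hVU hu hv hs)
    (S.pair_fderiv_diff hV hVU hu hv ht) z z'

lemma curv_sym {V : Set (Fin m → ℂ)} (hV : IsOpen V) (hVU : V ⊆ S.U)
    {u v : (Fin m → ℂ) → H} (hu : ContDiffOn ℝ (⊤ : ℕ∞) u V)
    (hv : ContDiffOn ℝ (⊤ : ℕ∞) v V) {t : Fin m → ℂ} (ht : t ∈ V) (z z' : Fin m → ℂ) :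
    S.h t (curvC S.δ u t z z') (v t) = S.h t (u t) (curvC S.δ v t z' z) := by
  have htU := hVU ht
  have hδvz' : ContDiffOn ℝ (⊤ : ℕ∞) (fun s => S.δ v s z') V := S.hδsm V hV hVU v hv z'
  have hδuz : ContDiffOn ℝ (⊤ : ℕ∞) (fun s => S.δ u s z) V := S.hδsm V hV hVU u hu z
  have hdbu : ContDiffOn ℝ (⊤ : ℕ∞) (fun s => delbar u s z') V := contDiffOn_delbar hV hu z'
  have hdbv : ContDiffOn ℝ (⊤ : ℕ∞) (fun s => delbar v s z) V := contDiffOn_delbar hV hv z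
  -- side A
  have hPA : (fun s => delbar (fun s' => S.h s' (u s') (v s')) s z')
      =ᶠ[nhds t] (fun s => S.h s (u s) (S.δ v s z') + S.h s (delbar u s z') (v s)) := by
    filter_upwards [hV.mem_nhds ht] with s hs
    exact S.delbar_pair hV hVU hu hv hs z'
  have dA1 : DifferentiableAt ℝ (fun s => S.h s (u s) (S.δ v s z')) t :=
    S.pairdiff hV hVU hu hδvz' ht
  have dA2 : DifferentiableAt ℝ (fun s => S.h s (delbar u s z') (v s)) t :=
    S.pairdiff hV hVU hdbu hv ht
  have eA : del (fun s => delbar (fun s' => S.h s' (u s') (v s')) s z') t z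
      = (S.h t (S.δ u t z) (S.δ v t z') + S.h t (u t) (delbar (fun s => S.δ v s z') t z))
        + (S.h t (S.δ (fun s => delbar u s z') t z) (v t)
          + S.h t (delbar u t z') (delbar v t z)) := by
    rw [del_congr hPA, del_add dA1 dA2,
      S.hδ V hV hVU u (fun s => S.δ v s z') hu hδvz' t ht z,
      S.hδ V hV hVU (fun s => delbar u s z') v hdbu hv t ht z]
  -- side B
  have hPB : (fun s => del (fun s' => S.h s' (u s') (v s')) s z)
      =ᶠ[nhds t] (fun s => S.h s (S.δ u s z) (v s) + S.h s (u s) (delbar v s z)) := by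
    filter_upwards [hV.mem_nhds ht] with s hs
    exact S.hδ V hV hVU u v hu hv s hs z
  have dB1 : DifferentiableAt ℝ (fun s => S.h s (S.δ u s z) (v s)) t :=
    S.pairdiff hV hVU hδuz hv ht
  have dB2 : DifferentiableAt ℝ (fun s => S.h s (u s) (delbar v s z)) t :=
    S.pairdiff hV hVU hu hdbv ht
  have eB : delbar (fun s => del (fun s' => S.h s' (u s') (v s')) s z) t z'
      = (S.h t (S.δ u t z) (S.δ v t z')
          + S.h t (delbar (fun s => S.δ u s z) t z') (v t))
        + (S.h t (u t) (S.δ (fun s => delbar v s z) t z')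
          + S.h t (delbar u t z') (delbar v t z)) := by
    rw [delbar_congr hPB, delbar_add dB1 dB2,
      S.delbar_pair hV hVU hδuz hv ht z', S.delbar_pair hV hVU hu hdbv ht z']
  have eAB := S.pair_clairaut hV hVU hu hv ht z z'
  rw [eA, eB] at eAB
  -- expand curvatures
  unfold curvC
  rw [S.hsub t htU, S.h_sub_right htU]
  linear_combination eAB

lemma curv_add {V : Set (Fin m → ℂ)} (hV : IsOpen V) (hVU : V ⊆ S.U)
    {u v : (Fin m → ℂ) → H} (hu : ContDiffOn ℝ (⊤ : ℕ∞) u V)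
    (hv : ContDiffOn ℝ (⊤ : ℕ∞) v V) {t : Fin m → ℂ} (ht : t ∈ V) (z z' : Fin m → ℂ) :
    curvC S.δ (fun s => u s + v s) t z z' = curvC S.δ u t z z' + curvC S.δ v t z z' := by
  have hdbu := contDiffOn_delbar hV hu z'
  have hdbv := contDiffOn_delbar hV hv z'
  have h1 : S.δ (fun s => delbar (fun s'' => u s'' + v s'') s z') t z
      = S.δ (fun s => delbar u s z') t z + S.δ (fun s => delbar v s z') t z := by
    have hloc : ∀ s ∈ V, delbar (fun s'' => u s'' + v s'') s z'
        = delbar u s z' + delbar v s z' := fun s hs =>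
      delbar_add (contDiffOn_differentiableAt hV hu hs) (contDiffOn_differentiableAt hV hv hs)
    rw [S.hδloc V hV hVU _ _ hloc t ht z]
    exact S.hδadd V hV hVU _ _ hdbu hdbv t ht z
  have h2 : delbar (fun s => S.δ (fun s'' => u s'' + v s'') s z) t z'
      = delbar (fun s => S.δ u s z) t z' + delbar (fun s => S.δ v s z) t z' := by
    have hloc : (fun s => S.δ (fun s'' => u s'' + v s'') s z)
        =ᶠ[nhds t] (fun s => S.δ u s z + S.δ v s z) := by
      filter_upwards [hV.mem_nhds ht] with s hs
      exact S.hδadd V hV hVU u v hu hv s hs z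
    rw [delbar_congr hloc]
    exact delbar_add
      (contDiffOn_differentiableAt hV (S.hδsm V hV hVU u hu z) ht)
      (contDiffOn_differentiableAt hV (S.hδsm V hV hVU v hv z) ht)
  unfold curvC
  rw [h1, h2]
  abel

lemma curv_vanish {V : Set (Fin m → ℂ)} (hV : IsOpen V) (hVU : V ⊆ S.U)
    {w : (Fin m → ℂ) → H} (hw : ContDiffOn ℝ (⊤ : ℕ∞) w V) {t : Fin m → ℂ} (ht : t ∈ V)
    (hwt : w t = 0) (z z' : Fin m → ℂ) : curvC S.δ w t z z' = 0 := by
  have key := S.curv_sym hV hVU hw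
    (contDiffOn_const (c := curvC S.δ w t z z')) ht z z'
  rw [hwt, S.h_zero_left (hVU ht)] at key
  exact S.h_self_eq_zero (hVU ht) key

lemma curv_eq_of_value {V : Set (Fin m → ℂ)} (hV : IsOpen V) (hVU : V ⊆ S.U)
    {u w : (Fin m → ℂ) → H} (hu : ContDiffOn ℝ (⊤ : ℕ∞) u V)
    (hw : ContDiffOn ℝ (⊤ : ℕ∞) w V) {t : Fin m → ℂ} (ht : t ∈ V)
    (hval : u t = w t) (z z' : Fin m → ℂ) :
    curvC S.δ u t z z' = curvC S.δ w t z z' := by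
  have h1 := S.curv_add hV hVU hu (hw.sub hu) ht z z'
  rw [show (fun s => u s + (w s - u s)) = w from funext fun s => by abel] at h1
  rw [h1, S.curv_vanish hV hVU (hw.sub hu) ht (by rw [hval]; abel) z z', add_zero]

lemma delta_zero {V : Set (Fin m → ℂ)} (hV : IsOpen V) (hVU : V ⊆ S.U)
    {t : Fin m → ℂ} (ht : t ∈ V) (z : Fin m → ℂ) :
    S.δ (fun _ => (0 : H)) t z = 0 := by
  have h0 := S.hδadd V hV hVU (fun _ => 0) (fun _ => 0)
    contDiffOn_const contDiffOn_const t ht z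
  rw [show (fun s : Fin m → ℂ => (0:H) + (0:H)) = (fun _ => (0:H)) from
    funext fun _ => by simp] at h0
  exact (left_eq_add.mp h0)

lemma delbar_delta_eq_neg_curv {V : Set (Fin m → ℂ)} (hV : IsOpen V) (hVU : V ⊆ S.U)
    {u : (Fin m → ℂ) → H} (hu : ContDiffOn ℝ (⊤ : ℕ∞) u V)
    (hhol : ∀ s ∈ V, ∀ z : Fin m → ℂ, delbar u s z = 0)
    {t : Fin m → ℂ} (ht : t ∈ V) (z : Fin m → ℂ) :
    delbar (fun s => S.δ u s z) t z = - curvC S.δ u t z z := by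
  have h1 : S.δ (fun s => delbar u s z) t z = 0 := by
    rw [S.hδloc V hV hVU (fun s => delbar u s z) (fun _ => (0:H))
      (fun s hs => hhol s hs z) t ht z]
    exact S.delta_zero hV hVU ht z
  unfold curvC
  rw [h1, zero_sub, neg_neg]

lemma key_re {V : Set (Fin m → ℂ)} (hV : IsOpen V) (hVU : V ⊆ S.U)
    {u : (Fin m → ℂ) → H} (hu : ContDiffOn ℝ (⊤ : ℕ∞) u V)
    (hhol : ∀ s ∈ V, ∀ z : Fin m → ℂ, delbar u s z = 0)
    {t : Fin m → ℂ} (ht : t ∈ V) (z : Fin m → ℂ) {ε : ℝ} (hε : 0 < ε) :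
    (del (fun s => delbar
        (fun s' => ((Real.log ((S.h s' (u s') (u s')).re + ε) : ℝ) : ℂ)) s z) t z).re
      = (((S.h t (u t) (u t)).re + ε))⁻¹
          * ((S.h t (S.δ u t z) (S.δ u t z)).re - (S.h t (curvC S.δ u t z z) (u t)).re)
        - ((((S.h t (u t) (u t)).re + ε))^2)⁻¹
          * Complex.normSq (S.h t (S.δ u t z) (u t)) := by
  have htU := hVU ht
  have hδsmooth : ContDiffOn ℝ (⊤ : ℕ∞) (fun s => S.δ u s z) V := S.hδsm V hV hVU u hu z
  have hqd : ∀ s ∈ V, DifferentiableAt ℝ (fun s' => S.h s' (u s') (u s')) s :=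
    fun s hs => S.qdiff hV hVU hu hs
  have hfRd : ∀ s ∈ V, DifferentiableAt ℝ
      (fun s' => (S.h s' (u s') (u s')).re + ε) s := fun s hs =>
    (Complex.reCLM.differentiableAt.comp s (hqd s hs)).add_const ε
  have hfRpos : ∀ s ∈ V, 0 < (S.h s (u s) (u s)).re + ε := fun s hs =>
    add_pos_of_nonneg_of_pos (S.h_re_nonneg (hVU hs) (u s)) hε
  have hcast : ∀ s ∈ V, (fun σ => (((S.h σ (u σ) (u σ)).re + ε : ℝ) : ℂ))
      =ᶠ[nhds s] (fun σ => S.h σ (u σ) (u σ) + (ε : ℂ)) := by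
    intro s hs
    filter_upwards [hV.mem_nhds hs] with σ hσ
    push_cast
    rw [S.h_real (hVU hσ) (u σ)]
  -- inner first derivative
  have hG : ∀ s ∈ V, delbar
      (fun s' => ((Real.log ((S.h s' (u s') (u s')).re + ε) : ℝ) : ℂ)) s z
      = ((((S.h s (u s) (u s)).re + ε))⁻¹ : ℝ) • (S.h s (u s) (S.δ u s z)) := by
    intro s hs
    rw [delbar_log (hfRd s hs) (hfRpos s hs)]
    rw [delbar_congr (hcast s hs), delbar_add_const]
    rw [S.delbar_pair hV hVU hu hu hs z, hhol s hs z, S.h_zero_left (hVU hs), add_zero]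
  have hOuter : (fun s => delbar
      (fun s' => ((Real.log ((S.h s' (u s') (u s')).re + ε) : ℝ) : ℂ)) s z)
      =ᶠ[nhds t] (fun s =>
        (((((S.h s (u s) (u s)).re + ε))⁻¹ : ℝ) : ℂ) * (S.h s (u s) (S.δ u s z))) := by
    filter_upwards [hV.mem_nhds ht] with s hs
    rw [hG s hs, Complex.real_smul]
  rw [del_congr hOuter]
  -- derivative of the inverse factor
  have hfd : DifferentiableAt ℝ
      (fun s => ((((S.h s (u s) (u s)).re + ε)⁻¹ : ℝ) : ℂ)) t := by
    exact Complex.ofRealCLM.differentiableAt.comp t ((hfRd t ht).inv (hfRpos t ht).ne')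
  have hPd : DifferentiableAt ℝ (fun s => S.h s (u s) (S.δ u s z)) t :=
    S.pairdiff hV hVU hu hδsmooth ht
  have hmul : del (fun s =>
      (((((S.h s (u s) (u s)).re + ε))⁻¹ : ℝ) : ℂ) * (S.h s (u s) (S.δ u s z))) t z
      = del (fun s => ((((S.h s (u s) (u s)).re + ε)⁻¹ : ℝ) : ℂ)) t z
          * (S.h t (u t) (S.δ u t z))
        + ((((S.h t (u t) (u t)).re + ε)⁻¹ : ℝ) : ℂ)
          * del (fun s => S.h s (u s) (S.δ u s z)) t z := by
    exact del_smul hfd hPd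
  rw [hmul]
  -- compute del of inverse factor
  have hdelq : del (fun s' => S.h s' (u s') (u s')) t z = S.h t (S.δ u t z) (u t) := by
    rw [S.hδ V hV hVU u u hu hu t ht z, hhol t ht z, S.h_zero_right htU, add_zero]
  have hinv : del (fun s => ((((S.h s (u s) (u s)).re + ε)⁻¹ : ℝ) : ℂ)) t z
      = (-(((S.h t (u t) (u t)).re + ε) ^ 2)⁻¹ : ℝ) • S.h t (S.δ u t z) (u t) := by
    rw [del_inv (hfRd t ht) (hfRpos t ht).ne']
    rw [del_congr (hcast t ht), del_add_const, hdelq]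
  -- compute del of P
  have hdelP : del (fun s => S.h s (u s) (S.δ u s z)) t z
      = S.h t (S.δ u t z) (S.δ u t z) - S.h t (u t) (curvC S.δ u t z z) := by
    rw [S.hδ V hV hVU u (fun s => S.δ u s z) hu hδsmooth t ht z]
    rw [S.delbar_delta_eq_neg_curv hV hVU hu hhol ht z, S.h_neg_right htU]
    ring
  rw [hinv, hdelP]
  -- real part bookkeeping
  have hconj : S.h t (u t) (S.δ u t z) = starRingEnd ℂ (S.h t (S.δ u t z) (u t)) :=
    S.hsymm t htU _ _
  have hcre : (S.h t (u t) (curvC S.δ u t z z)).re = (S.h t (curvC S.δ u t z z) (u t)).re := by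
    rw [S.hsymm t htU (u t) (curvC S.δ u t z z)]
    exact Complex.conj_re _
  set A := S.h t (S.δ u t z) (S.δ u t z)
  set B := S.h t (u t) (curvC S.δ u t z z)
  set β := S.h t (S.δ u t z) (u t)
  set r : ℝ := (S.h t (u t) (u t)).re + ε
  rw [hconj]
  simp only [Complex.real_smul, Complex.add_re, Complex.mul_re, Complex.sub_re,
    Complex.ofReal_re, Complex.ofReal_im, Complex.sub_im, Complex.mul_im,
    Complex.conj_re, Complex.conj_im, Complex.normSq_apply]
  rw [← hcre]
  ring

lemma forward
    (hneg : ∀ v : (Fin m → ℂ) → H, ContDiffOn ℝ (⊤ : ℕ∞) v S.U →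
      ∀ t ∈ S.U, ∀ z : Fin m → ℂ, (S.h t (curvC S.δ v t z z) (v t)).re ≤ 0)
    {V : Set (Fin m → ℂ)} (hV : IsOpen V) (hVU : V ⊆ S.U)
    {u : (Fin m → ℂ) → H} (hu : ContDiffOn ℝ (⊤ : ℕ∞) u V)
    (hhol : ∀ s ∈ V, ∀ z : Fin m → ℂ, delbar u s z = 0)
    {ε : ℝ} (hε : 0 < ε) {t : Fin m → ℂ} (ht : t ∈ V) (z : Fin m → ℂ) :
    0 ≤ (del (fun s => delbar
        (fun s' => ((Real.log ((S.h s' (u s') (u s')).re + ε) : ℝ) : ℂ)) s z) t z).re := by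
  rw [S.key_re hV hVU hu hhol ht z hε]
  have htU := hVU ht
  have hA : 0 ≤ (S.h t (S.δ u t z) (S.δ u t z)).re := S.h_re_nonneg htU _
  have hC : (S.h t (curvC S.δ u t z z) (u t)).re ≤ 0 := by
    have hval := S.curv_eq_of_value hV hVU hu (contDiffOn_const (c := u t)) ht rfl z z
    rw [hval]
    exact hneg (fun _ => u t) contDiffOn_const t htU z
  have hCS : Complex.normSq (S.h t (S.δ u t z) (u t))
      ≤ (S.h t (S.δ u t z) (S.δ u t z)).re * (S.h t (u t) (u t)).re :=
    S.cauchySchwarz htU _ _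
  have hq : 0 ≤ (S.h t (u t) (u t)).re := S.h_re_nonneg htU _
  have hr : 0 < (S.h t (u t) (u t)).re + ε := by linarith
  set r : ℝ := (S.h t (u t) (u t)).re + ε
  have hir : 0 < r⁻¹ := inv_pos.mpr hr
  have hirr : r⁻¹ * r = 1 := inv_mul_cancel₀ hr.ne'
  have h2 : ((r)^2)⁻¹ = r⁻¹ * r⁻¹ := by rw [pow_two, mul_inv]
  rw [h2]
  have hN : 0 ≤ Complex.normSq (S.h t (S.δ u t z) (u t)) := Complex.normSq_nonneg _
  nlinarith [mul_le_mul_of_nonneg_left hCS (le_of_lt (mul_pos hir hir)),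
    mul_nonneg hir.le hA, mul_nonneg (mul_nonneg hir.le hir.le) hA,
    mul_le_mul_of_nonneg_left hC hir.le]

lemma delta_sum {V : Set (Fin m → ℂ)} (hV : IsOpen V) (hVU : V ⊆ S.U)
    (g : Fin m → (Fin m → ℂ) → H) (hg : ∀ j, ContDiffOn ℝ (⊤ : ℕ∞) (g j) V)
    {t : Fin m → ℂ} (ht : t ∈ V) (z : Fin m → ℂ) (F : Finset (Fin m)) :
    S.δ (fun s => ∑ j ∈ F, g j s) t z = ∑ j ∈ F, S.δ (g j) t z := by
  induction F using Finset.induction_on with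
  | empty =>
    rw [show (fun s : Fin m → ℂ => ∑ j ∈ (∅ : Finset (Fin m)), g j s) = (fun _ => (0:H))
      from funext fun s => by simp]
    rw [S.delta_zero hV hVU ht z]
    simp
  | @insert a F' ha ih =>
    rw [show (fun s : Fin m → ℂ => ∑ j ∈ insert a F', g j s)
        = (fun s => g a s + ∑ j ∈ F', g j s) from funext fun s => by
          rw [Finset.sum_insert ha]]
    rw [S.hδadd V hV hVU _ _ (hg a) (ContDiffOn.sum fun j _ => hg j) t ht z, ih,
      Finset.sum_insert ha]

lemma reverse
    (hpsh : ∀ V : Set (Fin m → ℂ), IsOpen V → V ⊆ S.U →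
      ∀ u : (Fin m → ℂ) → H, ContDiffOn ℝ (⊤ : ℕ∞) u V →
      (∀ s ∈ V, ∀ z : Fin m → ℂ, delbar u s z = 0) →
      ∀ ε : ℝ, 0 < ε → ∀ t ∈ V, ∀ z : Fin m → ℂ,
        0 ≤ (del (fun s => delbar
          (fun s' => ((Real.log ((S.h s' (u s') (u s')).re + ε) : ℝ) : ℂ)) s z) t z).re)
    (v : (Fin m → ℂ) → H) (hv : ContDiffOn ℝ (⊤ : ℕ∞) v S.U)
    {t : Fin m → ℂ} (ht : t ∈ S.U) (z : Fin m → ℂ) :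
    (S.h t (curvC S.δ v t z z) (v t)).re ≤ 0 := by
  set a : H := v t with ha
  set cc : Fin m → H := fun j => - S.δ (fun _ => a) t ((Pi.single j 1 : Fin m → ℂ))
    with hcc
  set u : (Fin m → ℂ) → H := fun s => a + ∑ j : Fin m, (s j - t j) • cc j with hu
  have hgsm : ∀ j : Fin m, ContDiff ℝ (⊤ : ℕ∞) (fun s : Fin m → ℂ => (s j - t j) • cc j) := by
    intro j
    have h1 : ContDiff ℝ (⊤ : ℕ∞) (fun s : Fin m → ℂ => s j - t j) :=
      ((ContinuousLinearMap.proj (R := ℝ) (φ := fun _ : Fin m => ℂ) j).contDiff).sub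
        contDiff_const
    exact (((ContinuousLinearMap.lsmul ℝ ℂ : ℂ →L[ℝ] H →L[ℝ] H).contDiff.comp
      h1).clm_apply contDiff_const :)
  have husm : ContDiffOn ℝ (⊤ : ℕ∞) u S.U := by
    rw [hu]
    exact contDiffOn_const.add ((ContDiff.contDiffOn (ContDiff.sum fun j _ => hgsm j)))
  have hut : u t = a := by rw [hu]; simp
  have hterm_d : ∀ (j : Fin m) (s : Fin m → ℂ),
      DifferentiableAt ℝ (fun s' : Fin m → ℂ => (s' j - t j) • cc j) s := fun j s =>
    ((hgsm j).differentiable (by simp)).differentiableAt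
  have hhol : ∀ s : Fin m → ℂ, ∀ w : Fin m → ℂ, delbar u s w = 0 := by
    intro s w
    rw [hu]
    rw [show (fun s' : Fin m → ℂ => a + ∑ j : Fin m, (s' j - t j) • cc j)
        = (fun s' => (∑ j : Fin m, (s' j - t j) • cc j) + a) from
      funext fun s' => by rw [add_comm]]
    rw [delbar_add_const]
    have : delbar (fun s' : Fin m → ℂ => ∑ j : Fin m, (s' j - t j) • cc j) s w
        = ∑ j : Fin m, delbar (fun s' : Fin m → ℂ => (s' j - t j) • cc j) s w := by
      unfold delbar
      rw [fderiv_fun_sum (fun j _ => hterm_d j s)]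
      simp only [ContinuousLinearMap.coe_sum', Finset.sum_apply]
      rw [Finset.smul_sum, ← Finset.sum_add_distrib, Finset.smul_sum]
    rw [this]
    refine Finset.sum_eq_zero fun j _ => ?_
    rw [delbar_smul (by
        exact ((lam_smooth j (t j) 0).differentiable (by simp)).differentiableAt.congr_of_eventuallyEq
          (Filter.Eventually.of_forall fun s' => by simp) |>.congr_of_eventuallyEq
          (Filter.Eventually.of_forall fun s' => rfl))
      (differentiableAt_const (cc j))]
    rw [delbar_coord j (t j), delbar_const]
    simp
  have hδu : S.δ u t z = 0 := by
    rw [hu]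
    rw [show (fun s : Fin m → ℂ => a + ∑ j : Fin m, (s j - t j) • cc j)
        = (fun s => (fun _ => a) s + (fun s' => ∑ j : Fin m, (s' j - t j) • cc j) s) from rfl]
    rw [S.hδadd S.U S.hU (le_refl _) _ _ contDiffOn_const
      (ContDiff.contDiffOn (ContDiff.sum fun j _ => hgsm j)) t ht z]
    rw [S.delta_sum S.hU (le_refl _) _ (fun j => (hgsm j).contDiffOn) ht z Finset.univ]
    have hterm : ∀ j : Fin m, S.δ (fun s : Fin m → ℂ => (s j - t j) • cc j) t z
        = (z j) • cc j := by
      intro j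
      rw [S.hLeib S.U S.hU (le_refl _) (fun s => s j - t j) (fun _ => cc j)
        (((ContinuousLinearMap.proj (R := ℝ) (φ := fun _ : Fin m => ℂ) j).contDiff).sub
          contDiff_const).contDiffOn contDiffOn_const t ht z]
      rw [del_coord j (t j)]
      simp [S.delta_zero S.hU (le_refl _) ht z]
    simp only [hterm]
    -- sum of z j • cc j equals -δ_a z by linearity
    have hlin := S.hδlin (fun _ => a) t ht
    have hsum : ∑ j : Fin m, (z j) • S.δ (fun _ => a) t ((Pi.single j 1 : Fin m → ℂ))
        = S.δ (fun _ => a) t z := by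
      have h1 : ∑ j : Fin m, (z j) • S.δ (fun _ => a) t ((Pi.single j 1 : Fin m → ℂ))
          = ∑ j : Fin m, S.δ (fun _ => a) t ((z j) • (Pi.single j 1 : Fin m → ℂ)) := by
        exact Finset.sum_congr rfl fun j _ => (hlin.map_smul (z j) _).symm
      rw [h1]
      have h2 : ∑ j : Fin m, S.δ (fun _ => a) t ((z j) • (Pi.single j 1 : Fin m → ℂ))
          = S.δ (fun _ => a) t (∑ j : Fin m, (z j) • (Pi.single j 1 : Fin m → ℂ)) := by
        exact (map_sum (IsLinearMap.mk' _ hlin) _ _).symm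
      rw [h2]
      congr 1
      funext k
      simp [Pi.single_apply, Finset.sum_apply]
    simp only [hcc, smul_neg]
    rw [show ∑ x : Fin m, -((z x) • S.δ (fun _ => a) t ((Pi.single x 1 : Fin m → ℂ)))
        = -∑ x : Fin m, (z x) • S.δ (fun _ => a) t ((Pi.single x 1 : Fin m → ℂ)) by
      rw [← Finset.sum_neg_distrib]]
    rw [hsum]
    abel
  -- apply psh hypothesis and key formula
  have hpos1 : (0:ℝ) < 1 := one_pos
  have hkey := S.key_re S.hU (le_refl _) husm (fun s _ w => hhol s w) ht z hpos1
  have hineq := hpsh S.U S.hU (le_refl _) u husm (fun s _ w => hhol s w) 1 hpos1 t ht z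
  rw [hkey, hδu] at hineq
  simp only [S.h_zero_left ht] at hineq
  simp only [Complex.zero_re, Complex.normSq_zero, zero_sub, mul_zero, sub_zero] at hineq
  have hr : 0 < (S.h t (u t) (u t)).re + 1 :=
    add_pos_of_nonneg_of_pos (S.h_re_nonneg ht _) one_pos
  have hI : (S.h t (curvC S.δ u t z z) (u t)).re ≤ 0 := by
    by_contra hgt
    push_neg at hgt
    have : ((S.h t (u t) (u t)).re + 1)⁻¹ * -(S.h t (curvC S.δ u t z z) (u t)).re < 0 := by
      apply mul_neg_of_pos_of_neg (inv_pos.mpr hr)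
      linarith
    linarith
  have hcv : curvC S.δ v t z z = curvC S.δ u t z z :=
    S.curv_eq_of_value S.hU (le_refl _) hv husm ht (by rw [hut]) z z
  rw [hcv, ← hut]
  exact hI

end Setup

/-- `h` a smoothly varying metric on `U × H` admitting a Chern connection `D`
(all the usual structural hypotheses, stated for local sections over open `V ⊆ U`), with
curvature `Θ`.  Then `iΘ ≤_G 0` (Griffiths seminegative, i.e. `Re h(Θ_{zz̄} v, v) ≤ 0` for
all smooth sections `v`) iff `log(‖u‖²_h + ε)` is plurisubharmonic for every holomorphic
local section `u` of `U × H` and every `ε > 0`. -/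
theorem statement_19 {m : ℕ} {H : Type*} [NormedAddCommGroup H] [NormedSpace ℂ H]
    (U : Set (Fin m → ℂ)) (hU : IsOpen U)
    (h : (Fin m → ℂ) → H → H → ℂ)
    (hadd : ∀ t ∈ U, ∀ u v w' : H, h t (u + v) w' = h t u w' + h t v w')
    (hsub : ∀ t ∈ U, ∀ u v w' : H, h t (u - v) w' = h t u w' - h t v w')
    (hsmul : ∀ t ∈ U, ∀ (c : ℂ) (u v : H), h t (c • u) v = c * h t u v)
    (hsymm : ∀ t ∈ U, ∀ u v : H, h t u v = starRingEnd ℂ (h t v u))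
    (hpos : ∀ t ∈ U, ∀ u : H, u ≠ 0 → 0 < (h t u u).re)
    (δ : ((Fin m → ℂ) → H) → (Fin m → ℂ) → (Fin m → ℂ) → H)
    -- metric compatibility, on local sections over any open `V ⊆ U`:
    (hδ : ∀ V : Set (Fin m → ℂ), IsOpen V → V ⊆ U →
      ∀ u v : (Fin m → ℂ) → H, ContDiffOn ℝ (⊤ : ℕ∞) u V → ContDiffOn ℝ (⊤ : ℕ∞) v V →
      ∀ t ∈ V, ∀ z : Fin m → ℂ,
        del (fun s => h s (u s) (v s)) t z = h t (δ u t z) (v t) + h t (u t) (delbar v t z))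
    (hδsm : ∀ V : Set (Fin m → ℂ), IsOpen V → V ⊆ U →
      ∀ u : (Fin m → ℂ) → H, ContDiffOn ℝ (⊤ : ℕ∞) u V →
      ∀ z : Fin m → ℂ, ContDiffOn ℝ (⊤ : ℕ∞) (fun t => δ u t z) V)
    (hδloc : ∀ V : Set (Fin m → ℂ), IsOpen V → V ⊆ U →
      ∀ u v : (Fin m → ℂ) → H, (∀ s ∈ V, u s = v s) →
      ∀ t ∈ V, ∀ z : Fin m → ℂ, δ u t z = δ v t z)
    (hδadd : ∀ V : Set (Fin m → ℂ), IsOpen V → V ⊆ U →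
      ∀ u v : (Fin m → ℂ) → H, ContDiffOn ℝ (⊤ : ℕ∞) u V → ContDiffOn ℝ (⊤ : ℕ∞) v V →
      ∀ t ∈ V, ∀ z : Fin m → ℂ, δ (fun s => u s + v s) t z = δ u t z + δ v t z)
    (hδlin : ∀ (u : (Fin m → ℂ) → H), ∀ t ∈ U, IsLinearMap ℂ (fun z => δ u t z))
    (hLeib : ∀ V : Set (Fin m → ℂ), IsOpen V → V ⊆ U →
      ∀ (f : (Fin m → ℂ) → ℂ) (u : (Fin m → ℂ) → H),
      ContDiffOn ℝ (⊤ : ℕ∞) f V → ContDiffOn ℝ (⊤ : ℕ∞) u V →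
      ∀ t ∈ V, ∀ z : Fin m → ℂ,
        δ (fun s => f s • u s) t z = del f t z • u t + f t • δ u t z) :
    (∀ v : (Fin m → ℂ) → H, ContDiffOn ℝ (⊤ : ℕ∞) v U →
        ∀ t ∈ U, ∀ z : Fin m → ℂ, (h t (curvC δ v t z z) (v t)).re ≤ 0)
      ↔ (∀ V : Set (Fin m → ℂ), IsOpen V → V ⊆ U →
          ∀ u : (Fin m → ℂ) → H, ContDiffOn ℝ (⊤ : ℕ∞) u V →
          (∀ t ∈ V, ∀ z : Fin m → ℂ, delbar u t z = 0) →
          ∀ ε : ℝ, 0 < ε →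
            PshOn (fun t => Real.log ((h t (u t) (u t)).re + ε)) V) := by
  let S : Setup m H := ⟨U, hU, h, hadd, hsub, hsmul, hsymm, hpos, δ,
    hδ, hδsm, hδloc, hδadd, hδlin, hLeib⟩
  constructor
  · intro hneg V hVo hVU u hu hhol ε hε
    show ∀ t ∈ V, ∀ z : Fin m → ℂ, _
    intro t ht z
    exact S.forward hneg hVo hVU hu hhol hε ht z
  · intro hpsh v hv t ht z
    refine S.reverse (fun V hVo hVU u hu hhol ε hε t ht z => ?_) v hv ht z
    exact hpsh V hVo hVU u hu hhol ε hε t ht z
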